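/- There exists a constant C > 0 such that the following holds. Let p be a prime with p ≡ 1 (mod 3), and let c_1,…,c_16, d_1,…,d_16 be integers such that for every pair (λ,μ) ∈ (ℤ/pℤ)² with (λ,μ) ≠ (0,0), the number of indices i with λc_i + μd_i ≡ 0 (mod p) is at most 11. Then ρ(p) ≥ p^{14} − C·p^{13}. -/

import Mathlib

set_option linter.unusedSectionVars false

open Finset AddChar

namespace RhoAux

variable {p : ℕ} [Fact p.Prime]

lemma p_ge_seven {p : ℕ} (hp : p.Prime) (h3 : p % 3 = 1) : 7 ≤ p := by
  by_contra h
  push_neg at h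
  interval_cases p <;> revert hp h3 <;> decide

omit [Fact p.Prime] in
lemma three_dvd_pred (h3 : p % 3 = 1) : 3 ∣ p - 1 := by
  omega

lemma norm_psi_val (ψ : AddChar (ZMod p) ℂ) (a : ZMod p) : ‖ψ a‖ = 1 := by
  have hp : (p : ℕ) ≠ 0 := (Fact.out : p.Prime).ne_zero
  have h : ψ a ^ p = 1 := by
    rw [← ψ.map_nsmul_eq_pow]
    have : (p : ℕ) • a = 0 := by
      simp [nsmul_eq_mul, ZMod.natCast_self]
    rw [this, ψ.map_zero_eq_one]
  exact Complex.norm_eq_one_of_pow_eq_one h hp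

lemma norm_chi_val {χ : MulChar (ZMod p) ℂ} (hχ3 : χ ^ 3 = 1) {a : ZMod p} (ha : a ≠ 0) :
    ‖χ a‖ = 1 := by
  have h : χ a ^ 3 = 1 := by
    rw [← MulChar.pow_apply' χ (by norm_num) a, hχ3, MulChar.one_apply (isUnit_iff_ne_zero.mpr ha)]
  exact Complex.norm_eq_one_of_pow_eq_one h (by norm_num)

lemma conj_gaussSum (χ : MulChar (ZMod p) ℂ) (ψ : AddChar (ZMod p) ℂ) :
    (starRingEnd ℂ) (gaussSum χ ψ) = gaussSum χ⁻¹ ψ⁻¹ := by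
  have hring : 0 < ringChar (ZMod p) := by
    rw [ZMod.ringChar_zmod_n]
    exact (Fact.out : p.Prime).pos
  rw [gaussSum, map_sum]
  refine Finset.sum_congr rfl fun t _ => ?_
  rw [map_mul, AddChar.starComp_apply hring, ← MulChar.star_apply']
  rfl

lemma norm_gaussSum {χ : MulChar (ZMod p) ℂ} (hχ : χ ≠ 1) {ψ : AddChar (ZMod p) ℂ}
    (hψ : ψ.IsPrimitive) : ‖gaussSum χ ψ‖ = Real.sqrt p := by
  have h := gaussSum_mul_gaussSum_eq_card hχ hψ
  rw [← conj_gaussSum] at h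
  rw [Complex.mul_conj] at h
  have hsq : Complex.normSq (gaussSum χ ψ) = p := by
    have := congrArg Complex.re h
    simpa [ZMod.card] using this
  rw [← hsq]
  rw [Complex.normSq_eq_norm_sq]
  rw [Real.sqrt_sq (norm_nonneg _)]



lemma norm_twisted_gauss {χ : MulChar (ZMod p) ℂ} (hχ : χ ≠ 1) (hχ3 : χ ^ 3 = 1)
    {ψ : AddChar (ZMod p) ℂ} (hψ : ψ.IsPrimitive) {a : ZMod p} (ha : a ≠ 0) :
    ‖∑ t : ZMod p, χ t * ψ (a * t)‖ = Real.sqrt p := by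
  have hu : IsUnit a := isUnit_iff_ne_zero.mpr ha
  have key := gaussSum_mulShift χ ψ hu.unit
  rw [IsUnit.unit_spec] at key
  have h1 : ∑ t : ZMod p, χ t * ψ (a * t) = gaussSum χ (ψ.mulShift a) := by
    rw [gaussSum]
    refine Finset.sum_congr rfl fun t _ => ?_
    rw [AddChar.mulShift_apply]
  rw [h1]
  have h2 := congrArg norm key
  rw [norm_mul, norm_chi_val hχ3 ha, one_mul] at h2
  rw [h2, norm_gaussSum hχ hψ]

/-- number of cube roots of `t` -/
noncomputable def cnt (p : ℕ) [NeZero p] (t : ZMod p) : ℕ := #(univ.filter fun x : ZMod p => x ^ 3 = t)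

lemma cnt_zero : cnt p 0 = 1 := by
  have : (univ.filter fun x : ZMod p => x ^ 3 = 0) = {0} := by
    ext x
    simp [pow_eq_zero_iff]
  rw [cnt, this, card_singleton]

lemma cnt_one (h3 : p % 3 = 1) : cnt p 1 = 3 := by
  obtain ⟨g, hg⟩ := IsCyclic.exists_generator (α := (ZMod p)ˣ)
  have horder : orderOf g = p - 1 := by
    rw [orderOf_eq_card_of_forall_mem_zpowers hg, Nat.card_eq_fintype_card, ZMod.card_units]
  have hp7 : 7 ≤ p := p_ge_seven (Fact.out : p.Prime) h3
  have h3d : 3 ∣ p - 1 := by omega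
  set e := (p - 1) / 3 with he
  have h3e : 3 * e = p - 1 := by omega
  have hepos : 0 < e := by omega
  have hge : (g ^ e) ^ 3 = 1 := by
    rw [← pow_mul, mul_comm, h3e, ← horder, pow_orderOf_eq_one]
  -- the map j ↦ (g^e)^j from range 3 to cube roots of 1 is a bijection
  have himage : (univ.filter fun x : ZMod p => x ^ 3 = 1)
      = (Finset.range 3).image (fun j => ((g ^ e) ^ j : (ZMod p)ˣ) : ℕ → ZMod p) := by
    ext x
    simp only [mem_filter, mem_univ, true_and, Finset.mem_image, Finset.mem_range]
    constructor
    · intro hx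
      have hxne : x ≠ 0 := by
        intro h0
        rw [h0] at hx
        simp at hx
      have hxu : IsUnit x := isUnit_iff_ne_zero.mpr hxne
      obtain ⟨m, hm⟩ := mem_powers_iff_mem_zpowers.mpr (hg hxu.unit)
      have hum : hxu.unit ^ 3 = 1 := by
        ext
        push_cast
        rw [IsUnit.unit_spec, hx]
      rw [← hm, ← pow_mul] at hum
      have : g ^ (m * 3) = g ^ 0 := by rw [hum, pow_zero]
      rw [pow_eq_pow_iff_modEq, horder] at this
      have hdvd : (p - 1) ∣ m * 3 := (Nat.modEq_zero_iff_dvd).mp this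
      obtain ⟨q, hq⟩ := hdvd
      have hmq : m = e * q := by
        have h33 : 3 * m = 3 * (e * q) := by
          rw [mul_comm 3 m, hq, ← h3e]; ring
        exact Nat.eq_of_mul_eq_mul_left (by norm_num) h33
      refine ⟨q % 3, Nat.mod_lt _ (by norm_num), ?_⟩
      have : (g ^ e) ^ (q % 3) = (g ^ e) ^ q := by
        conv_rhs => rw [← Nat.div_add_mod q 3]
        rw [pow_add, pow_mul, hge, one_pow, one_mul]
      simp only at hm
      rw [this, ← pow_mul, ← hmq, hm]
      rw [IsUnit.unit_spec]
    · rintro ⟨j, hj, rfl⟩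
      have : ((g ^ e) ^ j) ^ 3 = (1 : (ZMod p)ˣ) := by
        rw [← pow_mul, mul_comm j 3, pow_mul, hge, one_pow]
      calc ((((g ^ e) ^ j : (ZMod p)ˣ)) : ZMod p) ^ 3
          = ((((g ^ e) ^ j) ^ 3 : (ZMod p)ˣ) : ZMod p) := by push_cast; ring
        _ = 1 := by rw [this]; rfl
  rw [cnt, himage, Finset.card_image_of_injOn, Finset.card_range]
  intro j1 hj1 j2 hj2 hval
  simp only [Finset.coe_range, Set.mem_Iio] at hj1 hj2
  have : (g ^ e) ^ j1 = (g ^ e) ^ j2 := Units.ext hval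
  rw [← pow_mul, ← pow_mul, pow_eq_pow_iff_modEq, horder] at this
  have h1 : e * j1 < p - 1 := by nlinarith
  have h2 : e * j2 < p - 1 := by nlinarith
  have := (Nat.ModEq.eq_of_lt_of_lt this h1 h2)
  exact Nat.eq_of_mul_eq_mul_left hepos this



lemma cnt_cube {s : ZMod p} (hs : s ≠ 0) : cnt p (s ^ 3) = cnt p 1 := by
  classical
  refine Finset.card_bij (fun x _ => x * s⁻¹) ?_ ?_ ?_
  · intro x hx
    simp only [mem_filter, mem_univ, true_and] at hx ⊢
    rw [mul_pow, hx, inv_pow, mul_inv_cancel₀ (pow_ne_zero 3 hs)]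
  · intro x hx y hy hxy
    exact mul_right_cancel₀ (inv_ne_zero hs) hxy
  · intro y hy
    simp only [mem_filter, mem_univ, true_and] at hy
    refine ⟨y * s, ?_, ?_⟩
    · simp only [mem_filter, mem_univ, true_and]
      rw [mul_pow, hy, one_mul]
    · field_simp

lemma chi_cube_cases (h3 : p % 3 = 1) {χ : MulChar (ZMod p) ℂ} (hord : orderOf χ = 3)
    {t : ZMod p} (ht : t ≠ 0) :
    (cnt p t : ℂ) = 1 + χ t + (χ t) ^ 2 := by
  classical
  have hχ3 : χ ^ 3 = 1 := by rw [← hord]; exact pow_orderOf_eq_one χ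
  have hχ1 : χ ≠ 1 := by
    intro h
    rw [h, orderOf_one] at hord
    norm_num at hord
  obtain ⟨g, hg⟩ := IsCyclic.exists_generator (α := (ZMod p)ˣ)
  have horder : orderOf g = p - 1 := by
    rw [orderOf_eq_card_of_forall_mem_zpowers hg, Nat.card_eq_fintype_card, ZMod.card_units]
  have hp7 : 7 ≤ p := by
    have := (Fact.out : p.Prime)
    by_contra h
    push_neg at h
    interval_cases p <;> revert this h3 <;> decide
  set ω := χ ↑g with hω
  have hωcube : ω ^ 3 = 1 := by
    rw [hω, ← MulChar.pow_apply' χ (by norm_num : (3:ℕ) ≠ 0) ((g : ZMod p)), hχ3,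
      MulChar.one_apply_coe]
  have hωne : ω ≠ 1 := by
    intro hω1
    apply hχ1
    rw [MulChar.eq_one_iff]
    intro u
    obtain ⟨k, hk⟩ := mem_powers_iff_mem_zpowers.mpr (hg u)
    simp only at hk
    rw [← hk, Units.val_pow_eq_pow_val, map_pow, ← hω, hω1, one_pow]
  haveI : Fact (Nat.Prime 3) := ⟨by norm_num⟩
  have hωord : orderOf ω = 3 := orderOf_eq_prime hωcube hωne
  have hu : IsUnit t := isUnit_iff_ne_zero.mpr ht
  obtain ⟨k, hk⟩ := mem_powers_iff_mem_zpowers.mpr (hg hu.unit)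
  simp only at hk
  have htg : ((g : ZMod p)) ^ k = t := by
    rw [← Units.val_pow_eq_pow_val, hk, IsUnit.unit_spec]
  have hχt : χ t = ω ^ k := by rw [← htg, map_pow, hω]
  by_cases h3k : 3 ∣ k
  · obtain ⟨m, rfl⟩ := h3k
    have hχt1 : χ t = 1 := by rw [hχt, pow_mul, hωcube, one_pow]
    have htcube : t = ((g : ZMod p) ^ m) ^ 3 := by
      rw [← pow_mul, mul_comm m 3, htg]
    have hgm : ((g : ZMod p) ^ m) ≠ 0 := by
      rw [← Units.val_pow_eq_pow_val]
      exact Units.ne_zero _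
    have hcnt : cnt p t = 3 := by
      rw [htcube, cnt_cube hgm, cnt_one h3]
    rw [hcnt, hχt1]
    norm_num
  · have hχtne : χ t ≠ 1 := by
      rw [hχt]
      intro h1
      exact h3k (hωord ▸ orderOf_dvd_of_pow_eq_one h1)
    have hz3 : (χ t) ^ 3 = 1 := by
      rw [hχt, ← pow_mul, mul_comm, pow_mul, hωcube, one_pow]
    have hsum0 : 1 + χ t + (χ t) ^ 2 = 0 := by
      have hfac : (χ t - 1) * (1 + χ t + (χ t) ^ 2) = 0 := by
        linear_combination hz3
      rcases mul_eq_zero.mp hfac with h | h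
      · exact absurd (sub_eq_zero.mp h) hχtne
      · exact h
    have hcnt : cnt p t = 0 := by
      rw [cnt, Finset.card_eq_zero, Finset.filter_eq_empty_iff]
      intro x _
      intro hx
      have hxne : x ≠ 0 := by
        intro h0
        apply ht
        rw [← hx, h0]
        ring
      have hxu : IsUnit x := isUnit_iff_ne_zero.mpr hxne
      obtain ⟨m, hm⟩ := mem_powers_iff_mem_zpowers.mpr (hg hxu.unit)
      simp only at hm
      have hgm : g ^ (m * 3) = g ^ k := by
        apply Units.ext
        rw [Units.val_pow_eq_pow_val, Units.val_pow_eq_pow_val, htg, ← hx, pow_mul]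
        rw [← Units.val_pow_eq_pow_val, hm, IsUnit.unit_spec]
      rw [pow_eq_pow_iff_modEq, horder] at hgm
      have h3' : m * 3 ≡ k [MOD 3] := Nat.ModEq.of_dvd (by omega : (3:ℕ) ∣ p - 1) hgm
      apply h3k
      have hmod : k % 3 = 0 := by
        have := h3'
        unfold Nat.ModEq at this
        omega
      exact Nat.dvd_of_mod_eq_zero hmod
    rw [hcnt]
    push_cast
    linear_combination -hsum0



lemma S_fiber (ψ : AddChar (ZMod p) ℂ) (a : ZMod p) :
    ∑ x : ZMod p, ψ (a * x ^ 3) = ∑ t : ZMod p, (cnt p t : ℂ) * ψ (a * t) := by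
  classical
  have h1 : ∑ x : ZMod p, ψ (a * x ^ 3)
      = ∑ b ∈ Finset.image (fun x : ZMod p => x ^ 3) univ,
          #(univ.filter fun x : ZMod p => x ^ 3 = b) • ψ (a * b) :=
    Finset.sum_comp (fun t => ψ (a * t)) (fun x : ZMod p => x ^ 3)
  rw [h1]
  rw [Finset.sum_subset (Finset.subset_univ _)]
  · refine Finset.sum_congr rfl fun t _ => ?_
    rw [cnt, nsmul_eq_mul]
  · intro t _ ht
    have : #(univ.filter fun x : ZMod p => x ^ 3 = t) = 0 := by
      rw [Finset.card_eq_zero, Finset.filter_eq_empty_iff]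
      intro x _
      intro hx
      exact ht (Finset.mem_image.mpr ⟨x, Finset.mem_univ x, hx⟩)
    rw [this, zero_smul]

omit [Fact p.Prime] in
lemma chi_sq_ne_one {χ : MulChar (ZMod p) ℂ} (hord : orderOf χ = 3) : χ ^ 2 ≠ 1 := by
  intro h
  have h2 : orderOf χ ∣ 2 := orderOf_dvd_of_pow_eq_one h
  rw [hord] at h2
  norm_num at h2

lemma S_bound (h3 : p % 3 = 1) {χ : MulChar (ZMod p) ℂ} (hord : orderOf χ = 3)
    {ψ : AddChar (ZMod p) ℂ} (hψ : ψ.IsPrimitive) {a : ZMod p} (ha : a ≠ 0) :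
    ‖∑ x : ZMod p, ψ (a * x ^ 3)‖ ≤ 2 * Real.sqrt p := by
  classical
  have hχ3 : χ ^ 3 = 1 := by rw [← hord]; exact pow_orderOf_eq_one χ
  have hχ1 : χ ≠ 1 := by
    intro h
    rw [h, orderOf_one] at hord
    norm_num at hord
  rw [S_fiber]
  have hsplit : ∑ t : ZMod p, (cnt p t : ℂ) * ψ (a * t)
      = (∑ t : ZMod p, ψ (a * t)) + ((∑ t : ZMod p, χ t * ψ (a * t))
        + ∑ t : ZMod p, (χ ^ 2) t * ψ (a * t)) := by
    rw [← Finset.sum_add_distrib, ← Finset.sum_add_distrib]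
    refine Finset.sum_congr rfl fun t _ => ?_
    by_cases ht : t = 0
    · subst ht
      rw [cnt_zero, MulChar.map_zero, MulChar.map_zero]
      push_cast
      ring
    · rw [chi_cube_cases h3 hord ht, MulChar.pow_apply' χ (by norm_num) t]
      ring
  rw [hsplit]
  have hz : ∑ t : ZMod p, ψ (a * t) = 0 := by
    have h0 := AddChar.sum_mulShift a hψ
    rw [if_neg ha] at h0
    push_cast at h0
    rw [← h0]
    refine Finset.sum_congr rfl fun t _ => ?_
    rw [mul_comm]
  rw [hz, zero_add]
  have hsq3 : (χ ^ 2) ^ 3 = 1 := by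
    rw [← pow_mul, mul_comm, pow_mul, hχ3, one_pow]
  calc ‖(∑ t : ZMod p, χ t * ψ (a * t)) + ∑ t : ZMod p, (χ ^ 2) t * ψ (a * t)‖
      ≤ ‖∑ t : ZMod p, χ t * ψ (a * t)‖ + ‖∑ t : ZMod p, (χ ^ 2) t * ψ (a * t)‖ :=
        norm_add_le _ _
    _ ≤ 2 * Real.sqrt p := by
        rw [norm_twisted_gauss hχ1 hχ3 hψ ha,
          norm_twisted_gauss (chi_sq_ne_one hord) hsq3 hψ ha]
        ring_nf
        exact le_refl _

lemma S_zero (ψ : AddChar (ZMod p) ℂ) :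
    ∑ x : ZMod p, ψ ((0 : ZMod p) * x ^ 3) = (p : ℂ) := by
  have : ∀ x : ZMod p, ψ ((0 : ZMod p) * x ^ 3) = 1 := by
    intro x
    rw [zero_mul, ψ.map_zero_eq_one]
  simp only [this, Finset.sum_const, Finset.card_univ, ZMod.card, nsmul_eq_mul, mul_one]



lemma psi_prod {ι : Type*} (s : Finset ι) (ψ : AddChar (ZMod p) ℂ) (f : ι → ZMod p) :
    ψ (∑ i ∈ s, f i) = ∏ i ∈ s, ψ (f i) := by
  classical
  induction s using Finset.induction with
  | empty => simp [ψ.map_zero_eq_one]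
  | insert _ _ h ih => rw [Finset.sum_insert h, Finset.prod_insert h, ψ.map_add_eq_mul, ih]

lemma count_identity {ψ : AddChar (ZMod p) ℂ} (hψ : ψ.IsPrimitive) (C D : Fin 16 → ZMod p) :
    ∑ v : ZMod p × ZMod p, ∏ i, (∑ x : ZMod p, ψ ((v.1 * C i + v.2 * D i) * x ^ 3))
      = (p : ℂ) ^ 2 * #(univ.filter fun x : Fin 16 → ZMod p =>
          (∑ i, C i * x i ^ 3) = 0 ∧ (∑ i, D i * x i ^ 3) = 0) := by
  classical
  have step1 : ∀ v : ZMod p × ZMod p,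
      ∏ i, (∑ x : ZMod p, ψ ((v.1 * C i + v.2 * D i) * x ^ 3))
      = ∑ y : Fin 16 → ZMod p,
          ψ (v.1 * (∑ i, C i * y i ^ 3) + v.2 * (∑ i, D i * y i ^ 3)) := by
    intro v
    rw [Finset.prod_univ_sum (fun _ => (univ : Finset (ZMod p)))
      (fun i j => ψ ((v.1 * C i + v.2 * D i) * j ^ 3)), Fintype.piFinset_univ]
    refine Finset.sum_congr rfl fun y _ => ?_
    rw [← psi_prod]
    congr 1
    rw [Finset.mul_sum, Finset.mul_sum, ← Finset.sum_add_distrib]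
    refine Finset.sum_congr rfl fun i _ => ?_
    ring
  rw [Finset.sum_congr rfl fun v _ => step1 v]
  rw [Finset.sum_comm]
  have step2 : ∀ y : Fin 16 → ZMod p,
      ∑ v : ZMod p × ZMod p,
        ψ (v.1 * (∑ i, C i * y i ^ 3) + v.2 * (∑ i, D i * y i ^ 3))
      = (if (∑ i, C i * y i ^ 3) = 0 then (p : ℂ) else 0)
        * (if (∑ i, D i * y i ^ 3) = 0 then (p : ℂ) else 0) := by
    intro y
    rw [Fintype.sum_prod_type]
    simp_rw [ψ.map_add_eq_mul]
    rw [← Finset.sum_mul_sum]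
    have hF := AddChar.sum_mulShift (∑ i, C i * y i ^ 3) hψ
    have hG := AddChar.sum_mulShift (∑ i, D i * y i ^ 3) hψ
    rw [ZMod.card] at hF hG
    have hF' : ∑ x : ZMod p, ψ (x * ∑ i, C i * y i ^ 3)
        = if (∑ i, C i * y i ^ 3) = 0 then (p : ℂ) else 0 := by
      rw [hF]; split_ifs <;> simp
    have hG' : ∑ x : ZMod p, ψ (x * ∑ i, D i * y i ^ 3)
        = if (∑ i, D i * y i ^ 3) = 0 then (p : ℂ) else 0 := by
      rw [hG]; split_ifs <;> simp
    rw [← hF', ← hG']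
  rw [Finset.sum_congr rfl fun y _ => step2 y]
  have step3 : ∀ y : Fin 16 → ZMod p,
      (if (∑ i, C i * y i ^ 3) = 0 then (p : ℂ) else 0)
        * (if (∑ i, D i * y i ^ 3) = 0 then (p : ℂ) else 0)
      = if ((∑ i, C i * y i ^ 3) = 0 ∧ (∑ i, D i * y i ^ 3) = 0) then (p : ℂ) ^ 2 else 0 := by
    intro y
    by_cases h1 : (∑ i, C i * y i ^ 3) = 0 <;> by_cases h2 : (∑ i, D i * y i ^ 3) = 0 <;>
      simp [h1, h2] <;> ring
  rw [Finset.sum_congr rfl fun y _ => step3 y]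
  rw [← Finset.sum_filter]
  rw [Finset.sum_const, nsmul_eq_mul]
  ring



lemma Dcard_le {C D : Fin 16 → ZMod p}
    (hcard : ∀ v : ZMod p × ZMod p, v ≠ 0 →
      #(univ.filter fun i : Fin 16 => v.1 * C i + v.2 * D i = 0) ≤ 11) :
    #(univ.filter fun i : Fin 16 => C i = 0 ∧ D i = 0) ≤ 10 := by
  classical
  have hex : ∃ i₀ : Fin 16, ¬(C i₀ = 0 ∧ D i₀ = 0) := by
    by_contra h
    push_neg at h
    have h1 := hcard (1, 0) (by
      intro h0
      exact one_ne_zero (congrArg Prod.fst h0))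
    have heq : (univ.filter fun i : Fin 16 => (1 : ZMod p) * C i + (0 : ZMod p) * D i = 0)
        = univ := by
      refine Finset.filter_true_of_mem fun i _ => ?_
      rcases h i with ⟨h1', h2'⟩
      rw [h1', h2']
      ring
    rw [heq, card_univ, Fintype.card_fin] at h1
    norm_num at h1
  obtain ⟨i₀, hi₀⟩ := hex
  have hne : ((D i₀, -C i₀) : ZMod p × ZMod p) ≠ 0 := by
    intro h0
    apply hi₀
    have h1 : D i₀ = 0 := congrArg Prod.fst h0
    have h2 : -C i₀ = 0 := congrArg Prod.snd h0
    exact ⟨neg_eq_zero.mp h2, h1⟩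
  have key := hcard (D i₀, -C i₀) hne
  simp only at key
  have hsub : insert i₀ (univ.filter fun i : Fin 16 => C i = 0 ∧ D i = 0)
      ⊆ univ.filter fun i : Fin 16 => (D i₀) * C i + (-C i₀) * D i = 0 := by
    intro i hi
    rcases Finset.mem_insert.mp hi with rfl | hi
    · simp only [mem_filter, mem_univ, true_and]
      ring
    · simp only [mem_filter, mem_univ, true_and] at hi ⊢
      rw [hi.1, hi.2]
      ring
  have hnotmem : i₀ ∉ (univ.filter fun i : Fin 16 => C i = 0 ∧ D i = 0) := by
    simp only [mem_filter, mem_univ, true_and]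
    exact hi₀
  have := Finset.card_le_card hsub
  rw [Finset.card_insert_of_notMem hnotmem] at this
  omega

lemma Bcard_le (C D : Fin 16 → ZMod p) :
    #(univ.filter fun v : ZMod p × ZMod p =>
        v ≠ 0 ∧ ∃ i, ¬(C i = 0 ∧ D i = 0) ∧ v.1 * C i + v.2 * D i = 0) ≤ 16 * p := by
  classical
  have hsub : (univ.filter fun v : ZMod p × ZMod p =>
        v ≠ 0 ∧ ∃ i, ¬(C i = 0 ∧ D i = 0) ∧ v.1 * C i + v.2 * D i = 0)
      ⊆ univ.biUnion fun i : Fin 16 =>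
          univ.filter fun v : ZMod p × ZMod p =>
            ¬(C i = 0 ∧ D i = 0) ∧ v.1 * C i + v.2 * D i = 0 := by
    intro v hv
    simp only [mem_filter, mem_univ, true_and] at hv
    obtain ⟨-, i, hi1, hi2⟩ := hv
    refine Finset.mem_biUnion.mpr ⟨i, Finset.mem_univ i, ?_⟩
    simp only [mem_filter, mem_univ, true_and]
    exact ⟨hi1, hi2⟩
  refine le_trans (Finset.card_le_card hsub) (le_trans (Finset.card_biUnion_le) ?_)
  have hper : ∀ i : Fin 16,
      #(univ.filter fun v : ZMod p × ZMod p =>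
        ¬(C i = 0 ∧ D i = 0) ∧ v.1 * C i + v.2 * D i = 0) ≤ p := by
    intro i
    by_cases hdeg : C i = 0 ∧ D i = 0
    · have : (univ.filter fun v : ZMod p × ZMod p =>
          ¬(C i = 0 ∧ D i = 0) ∧ v.1 * C i + v.2 * D i = 0) = ∅ := by
        refine Finset.filter_eq_empty_iff.mpr fun v _ => ?_
        intro hv
        exact hv.1 hdeg
      rw [this]
      simp
    · by_cases hc : C i = 0
      · have hd : D i ≠ 0 := fun h => hdeg ⟨hc, h⟩
        have hinj : Set.InjOn (fun v : ZMod p × ZMod p => v.1)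
            ↑(univ.filter fun v : ZMod p × ZMod p =>
              ¬(C i = 0 ∧ D i = 0) ∧ v.1 * C i + v.2 * D i = 0) := by
          intro v hv w hw hvw
          simp only [Finset.coe_filter, Set.mem_setOf_eq, mem_univ, true_and] at hv hw
          have h1 : v.2 * D i = w.2 * D i := by
            have e1 := hv.2
            have e2 := hw.2
            rw [hc] at e1 e2
            rw [mul_zero, zero_add] at e1 e2
            rw [e1, e2]
          exact Prod.ext hvw (mul_right_cancel₀ hd h1)
        have hcle := Finset.card_le_card_of_injOn (t := (univ : Finset (ZMod p)))
          (fun v : ZMod p × ZMod p => v.1) (fun v _ => Finset.mem_univ _) hinj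
        simpa [Finset.card_univ, ZMod.card] using hcle
      · have hinj : Set.InjOn (fun v : ZMod p × ZMod p => v.2)
            ↑(univ.filter fun v : ZMod p × ZMod p =>
              ¬(C i = 0 ∧ D i = 0) ∧ v.1 * C i + v.2 * D i = 0) := by
          intro v hv w hw hvw
          simp only [Finset.coe_filter, Set.mem_setOf_eq, mem_univ, true_and] at hv hw
          simp only at hvw
          have h1 : v.1 * C i = w.1 * C i := by
            have e1 := hv.2
            have e2 := hw.2
            rw [hvw] at e1
            linear_combination e1 - e2
          exact Prod.ext (mul_right_cancel₀ hc h1) hvw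
        have hcle := Finset.card_le_card_of_injOn (t := (univ : Finset (ZMod p)))
          (fun v : ZMod p × ZMod p => v.2) (fun v _ => Finset.mem_univ _) hinj
        simpa [Finset.card_univ, ZMod.card] using hcle
  calc ∑ i : Fin 16, #(univ.filter fun v : ZMod p × ZMod p =>
        ¬(C i = 0 ∧ D i = 0) ∧ v.1 * C i + v.2 * D i = 0)
      ≤ ∑ _i : Fin 16, p := Finset.sum_le_sum fun i _ => hper i
    _ = 16 * p := by simp [Finset.sum_const, mul_comm]



lemma two_sqrt_le (hp7 : 7 ≤ p) : 2 * Real.sqrt p ≤ (p : ℝ) := by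
  have h4 : (4 : ℝ) ≤ (p : ℝ) := by exact_mod_cast (by omega : 4 ≤ p)
  have hs := Real.sq_sqrt (show (0:ℝ) ≤ p by positivity)
  nlinarith [sq_nonneg (Real.sqrt (p:ℝ) - 2), Real.sqrt_nonneg (p : ℝ)]

lemma prod_S_bound (h3 : p % 3 = 1) (hp7 : 7 ≤ p) {χ : MulChar (ZMod p) ℂ}
    (hord : orderOf χ = 3) {ψ : AddChar (ZMod p) ℂ} (hψ : ψ.IsPrimitive)
    (A : Fin 16 → ZMod p) {K : ℕ} (hK16 : K ≤ 16)
    (hk : #(univ.filter fun i : Fin 16 => A i = 0) ≤ K) :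
    ‖∏ i : Fin 16, ∑ x : ZMod p, ψ (A i * x ^ 3)‖
      ≤ (p : ℝ) ^ K * (2 * Real.sqrt p) ^ (16 - K) := by
  classical
  have hs0 : (0:ℝ) ≤ 2 * Real.sqrt p := by positivity
  have h2s : 2 * Real.sqrt p ≤ (p : ℝ) := two_sqrt_le hp7
  have hp0 : (0:ℝ) ≤ (p:ℝ) := by positivity
  rw [norm_prod]
  have step1 : ∏ i : Fin 16, ‖∑ x : ZMod p, ψ (A i * x ^ 3)‖
      ≤ ∏ i : Fin 16, (if A i = 0 then (p:ℝ) else 2 * Real.sqrt p) := by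
    refine Finset.prod_le_prod (fun i _ => norm_nonneg _) (fun i _ => ?_)
    by_cases h : A i = 0
    · rw [if_pos h, h, S_zero ψ]
      rw [Complex.norm_natCast]
    · rw [if_neg h]
      exact S_bound h3 hord hψ h
  refine le_trans step1 ?_
  rw [Finset.prod_ite, Finset.prod_const, Finset.prod_const]
  set k := #(univ.filter fun i : Fin 16 => A i = 0) with hkdef
  have hcards : #(univ.filter fun i : Fin 16 => ¬(A i = 0)) = 16 - k := by
    have := Finset.card_filter_add_card_filter_not
      (s := (univ : Finset (Fin 16))) (p := fun i => A i = 0)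
    simp only [Finset.card_univ, Fintype.card_fin] at this
    omega
  rw [hcards]
  -- now: p^k * (2√p)^(16-k) ≤ p^K * (2√p)^(16-K)
  have hkK : k ≤ K := hk
  have hsplit : (16:ℕ) - k = (16 - K) + (K - k) := by omega
  have hKsplit : K = k + (K - k) := by omega
  rw [hsplit, pow_add]
  have h1 : (2 * Real.sqrt p) ^ (K - k) ≤ (p:ℝ) ^ (K - k) :=
    pow_le_pow_left₀ hs0 h2s _
  calc (p:ℝ) ^ k * ((2 * Real.sqrt p) ^ (16 - K) * (2 * Real.sqrt p) ^ (K - k))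
      ≤ (p:ℝ) ^ k * ((2 * Real.sqrt p) ^ (16 - K) * (p:ℝ) ^ (K - k)) := by
        refine mul_le_mul_of_nonneg_left (mul_le_mul_of_nonneg_left h1 (by positivity)) (by positivity)
    _ = (p:ℝ) ^ K * (2 * Real.sqrt p) ^ (16 - K) := by
        have hK' : k + (K - k) = K := by omega
        have e : (p:ℝ) ^ k * (p:ℝ) ^ (K - k) = (p:ℝ) ^ K := by
          rw [← pow_add, hK']
        rw [show (p:ℝ) ^ k * ((2 * Real.sqrt p) ^ (16 - K) * (p:ℝ) ^ (K - k))
            = ((p:ℝ) ^ k * (p:ℝ) ^ (K - k)) * (2 * Real.sqrt p) ^ (16 - K) from by ring, e]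



lemma main_generic (h3 : p % 3 = 1) (C D : Fin 16 → ZMod p)
    (hcard : ∀ v : ZMod p × ZMod p, v ≠ 0 →
      #(univ.filter fun i : Fin 16 => v.1 * C i + v.2 * D i = 0) ≤ 11) :
    (p : ℝ) ^ 14 - 576 * (p : ℝ) ^ 13
      ≤ (#(univ.filter fun x : Fin 16 → ZMod p =>
          (∑ i, C i * x i ^ 3) = 0 ∧ (∑ i, D i * x i ^ 3) = 0) : ℝ) := by
  classical
  have hp7 : 7 ≤ p := by
    have hp := (Fact.out : p.Prime)
    by_contra h
    push_neg at h
    interval_cases p <;> revert hp h3 <;> decide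
  have hp1R : (1:ℝ) ≤ (p:ℝ) := by exact_mod_cast (by omega : 1 ≤ p)
  have hppR : (0:ℝ) < (p:ℝ) := by linarith
  obtain ⟨χ, hord⟩ := MulChar.exists_mulChar_orderOf (ZMod p)
    (by rw [ZMod.card]; omega) (Complex.isPrimitiveRoot_exp 3 (by norm_num))
  set ψ := AddChar.FiniteField.primitiveChar_to_Complex (ZMod p) with hψdef
  have hψ : ψ.IsPrimitive := AddChar.FiniteField.primitiveChar_to_Complex_isPrimitive (ZMod p)
  set N := #(univ.filter fun x : Fin 16 → ZMod p =>
      (∑ i, C i * x i ^ 3) = 0 ∧ (∑ i, D i * x i ^ 3) = 0) with hN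
  set T : ZMod p × ZMod p → ℂ :=
    fun v => ∏ i, ∑ x : ZMod p, ψ ((v.1 * C i + v.2 * D i) * x ^ 3) with hT
  have hid : ∑ v : ZMod p × ZMod p, T v = (p : ℂ) ^ 2 * N := count_identity hψ C D
  have hT0 : T 0 = (p : ℂ) ^ 16 := by
    rw [hT]
    simp only
    have hz : ∀ i : Fin 16,
        ∑ x : ZMod p, ψ (((0 : ZMod p × ZMod p).1 * C i + (0 : ZMod p × ZMod p).2 * D i) * x ^ 3)
        = (p : ℂ) := by
      intro i
      rw [show ((0 : ZMod p × ZMod p).1 * C i + (0 : ZMod p × ZMod p).2 * D i) = (0 : ZMod p) by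
        simp]
      exact S_zero ψ
    rw [Finset.prod_congr rfl fun i _ => hz i, Finset.prod_const, Finset.card_univ,
      Fintype.card_fin]
  have hsplit : ∑ v : ZMod p × ZMod p, T v = T 0 + ∑ v ∈ univ.erase 0, T v :=
    (Finset.add_sum_erase univ T (mem_univ _)).symm
  set B := univ.filter (fun v : ZMod p × ZMod p =>
      v ≠ 0 ∧ ∃ i, ¬(C i = 0 ∧ D i = 0) ∧ v.1 * C i + v.2 * D i = 0) with hB
  have hDc : #(univ.filter fun i : Fin 16 => C i = 0 ∧ D i = 0) ≤ 10 := Dcard_le hcard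
  have hBc : #B ≤ 16 * p := Bcard_le C D
  have hs0 : (0:ℝ) ≤ Real.sqrt p := Real.sqrt_nonneg _
  have hs2 : Real.sqrt p ^ 2 = (p:ℝ) := Real.sq_sqrt (by positivity)
  have hsle : Real.sqrt p ≤ (p:ℝ) := by
    have hple : (p:ℝ) ≤ (p:ℝ) ^ 2 := by nlinarith
    have h := Real.sqrt_le_sqrt hple
    rwa [Real.sqrt_sq (by positivity)] at h
  have hp0 : (0:ℝ) ≤ (p:ℝ) := by positivity
  -- per-point bounds
  have hbound1 : ∀ v ∈ B, ‖T v‖ ≤ (p:ℝ) ^ 11 * (2 * Real.sqrt p) ^ 5 := by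
    intro v hv
    have hv0 : v ≠ 0 := (Finset.mem_filter.mp hv).2.1
    have := prod_S_bound h3 hp7 hord hψ (fun i => v.1 * C i + v.2 * D i)
      (by norm_num : (11:ℕ) ≤ 16) (hcard v hv0)
    simpa only [show (16 - 11 : ℕ) = 5 by norm_num] using this
  have hbound2 : ∀ v ∈ (univ.erase (0 : ZMod p × ZMod p)).filter (· ∉ B),
      ‖T v‖ ≤ (p:ℝ) ^ 10 * (2 * Real.sqrt p) ^ 6 := by
    intro v hv
    rw [Finset.mem_filter] at hv
    have hv0 : v ≠ 0 := Finset.ne_of_mem_erase hv.1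
    have hnB : v ∉ B := hv.2
    have hsubD : (univ.filter fun i : Fin 16 => v.1 * C i + v.2 * D i = 0)
        ⊆ univ.filter fun i : Fin 16 => C i = 0 ∧ D i = 0 := by
      intro i hi
      rw [Finset.mem_filter] at hi ⊢
      refine ⟨mem_univ _, ?_⟩
      by_contra hcontra
      apply hnB
      rw [hB, Finset.mem_filter]
      exact ⟨mem_univ _, hv0, i, hcontra, hi.2⟩
    have hk10 : #(univ.filter fun i : Fin 16 => v.1 * C i + v.2 * D i = 0) ≤ 10 :=
      le_trans (Finset.card_le_card hsubD) hDc
    have := prod_S_bound h3 hp7 hord hψ (fun i => v.1 * C i + v.2 * D i)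
      (by norm_num : (10:ℕ) ≤ 16) hk10
    simpa only [show (16 - 10 : ℕ) = 6 by norm_num] using this
  -- total error bound
  have herr : ‖∑ v ∈ univ.erase (0 : ZMod p × ZMod p), T v‖ ≤ 576 * (p:ℝ) ^ 15 := by
    calc ‖∑ v ∈ univ.erase (0 : ZMod p × ZMod p), T v‖
        ≤ ∑ v ∈ univ.erase (0 : ZMod p × ZMod p), ‖T v‖ := norm_sum_le _ _
      _ = ∑ v ∈ (univ.erase (0 : ZMod p × ZMod p)).filter (· ∈ B), ‖T v‖
          + ∑ v ∈ (univ.erase (0 : ZMod p × ZMod p)).filter (· ∉ B), ‖T v‖ :=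
          (Finset.sum_filter_add_sum_filter_not _ _ _).symm
      _ ≤ (16 * p : ℝ) * ((p:ℝ) ^ 11 * (2 * Real.sqrt p) ^ 5)
          + ((p:ℝ) ^ 2) * ((p:ℝ) ^ 10 * (2 * Real.sqrt p) ^ 6) := by
          gcongr ?_ + ?_
          · calc ∑ v ∈ (univ.erase (0 : ZMod p × ZMod p)).filter (· ∈ B), ‖T v‖
                ≤ #((univ.erase (0 : ZMod p × ZMod p)).filter (· ∈ B))
                    • ((p:ℝ) ^ 11 * (2 * Real.sqrt p) ^ 5) := by
                  refine Finset.sum_le_card_nsmul _ _ _ fun v hv => ?_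
                  exact hbound1 v ((Finset.mem_filter.mp hv).2)
              _ ≤ (16 * p : ℝ) * ((p:ℝ) ^ 11 * (2 * Real.sqrt p) ^ 5) := by
                  rw [nsmul_eq_mul]
                  have hcle : #((univ.erase (0 : ZMod p × ZMod p)).filter (· ∈ B)) ≤ 16 * p := by
                    refine le_trans (Finset.card_le_card ?_) hBc
                    intro v hv
                    exact (Finset.mem_filter.mp hv).2
                  refine mul_le_mul_of_nonneg_right ?_ (by positivity)
                  exact_mod_cast hcle
          · calc ∑ v ∈ (univ.erase (0 : ZMod p × ZMod p)).filter (· ∉ B), ‖T v‖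
                ≤ #((univ.erase (0 : ZMod p × ZMod p)).filter (· ∉ B))
                    • ((p:ℝ) ^ 10 * (2 * Real.sqrt p) ^ 6) :=
                  Finset.sum_le_card_nsmul _ _ _ hbound2
              _ ≤ ((p:ℝ) ^ 2) * ((p:ℝ) ^ 10 * (2 * Real.sqrt p) ^ 6) := by
                  rw [nsmul_eq_mul]
                  have hcle : #((univ.erase (0 : ZMod p × ZMod p)).filter (· ∉ B)) ≤ p ^ 2 := by
                    calc #((univ.erase (0 : ZMod p × ZMod p)).filter (· ∉ B))
                        ≤ #(univ : Finset (ZMod p × ZMod p)) :=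
                          Finset.card_le_card (Finset.filter_subset _ _ |>.trans
                            (Finset.erase_subset _ _))
                      _ = p ^ 2 := by
                          rw [Finset.card_univ, Fintype.card_prod, ZMod.card]
                          ring
                  refine mul_le_mul_of_nonneg_right ?_ (by positivity)
                  exact_mod_cast hcle
      _ ≤ 576 * (p:ℝ) ^ 15 := by
          have e5 : (2 * Real.sqrt p) ^ 5 = 32 * ((p:ℝ))^2 * Real.sqrt p := by
            have : (2 * Real.sqrt p) ^ 5 = 32 * (Real.sqrt p ^ 2) ^ 2 * Real.sqrt p := by ring
            rw [this, hs2]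
          have e6 : (2 * Real.sqrt p) ^ 6 = 64 * ((p:ℝ))^3 := by
            have : (2 * Real.sqrt p) ^ 6 = 64 * (Real.sqrt p ^ 2) ^ 3 := by ring
            rw [this, hs2]
          rw [e5, e6]
          have hkey : (16 * (p:ℝ)) * ((p:ℝ)^11 * (32 * (p:ℝ)^2 * Real.sqrt p))
              = 512 * (p:ℝ)^14 * Real.sqrt p := by ring
          have hkey2 : ((p:ℝ)^2) * ((p:ℝ)^10 * (64 * (p:ℝ)^3)) = 64 * (p:ℝ)^15 := by ring
          rw [hkey, hkey2]
          have h1 : 512 * (p:ℝ)^14 * Real.sqrt p ≤ 512 * (p:ℝ)^14 * (p:ℝ) := by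
            refine mul_le_mul_of_nonneg_left hsle (by positivity)
          have h2 : 512 * (p:ℝ)^14 * (p:ℝ) = 512 * (p:ℝ)^15 := by ring
          linarith
  -- combine into the final inequality
  have hdiff : (p:ℂ) ^ 2 * N - (p:ℂ) ^ 16 = ∑ v ∈ univ.erase (0 : ZMod p × ZMod p), T v := by
    rw [← hid, hsplit, hT0]
    ring
  have hrealeq : ((((p:ℝ)) ^ 2 * (N:ℝ) - ((p:ℝ)) ^ 16 : ℝ) : ℂ) = (p:ℂ) ^ 2 * N - (p:ℂ) ^ 16 := by
    push_cast
    ring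
  have hreal : |(p:ℝ) ^ 2 * (N:ℝ) - (p:ℝ) ^ 16| ≤ 576 * (p:ℝ) ^ 15 := by
    have h2 : ‖((((p:ℝ) ^ 2 * (N:ℝ) - (p:ℝ) ^ 16 : ℝ)) : ℂ)‖ ≤ 576 * (p:ℝ) ^ 15 := by
      rw [hrealeq, hdiff]
      exact herr
    rwa [Complex.norm_real, Real.norm_eq_abs] at h2
  have habs := abs_le.mp hreal
  have h1 : (p:ℝ) ^ 2 * ((p:ℝ) ^ 14 - 576 * (p:ℝ) ^ 13) ≤ (p:ℝ) ^ 2 * (N:ℝ) := by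
    have hident : (p:ℝ) ^ 2 * ((p:ℝ) ^ 14 - 576 * (p:ℝ) ^ 13)
        = (p:ℝ) ^ 16 - 576 * (p:ℝ) ^ 15 := by ring
    rw [hident]
    linarith [habs.1]
  have hppos : (0:ℝ) < (p:ℝ) ^ 2 := by positivity
  exact le_of_mul_le_mul_left h1 hppos


end RhoAux

/-- Lower bound `ρ(p) ≥ p^{14} − C·p^{13}` for the number of solutions mod `p`
of the pair of diagonal cubic forms, when `p ≡ 1 (mod 3)` and the singular
locus is small. -/
theorem rho_p_lower_bound :
    ∃ C : ℝ, 0 < C ∧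
      ∀ (p : ℕ) (c d : Fin 16 → ℤ),
        p.Prime → p % 3 = 1 →
        (∀ l m : ZMod p, ¬(l = 0 ∧ m = 0) →
          Nat.card {i : Fin 16 // l * (c i : ZMod p) + m * (d i : ZMod p) = 0} ≤ 11) →
        (p : ℝ) ^ 14 - C * (p : ℝ) ^ 13 ≤
          (Nat.card {x : Fin 16 → ZMod p //
            (∑ i, (c i : ZMod p) * x i ^ 3) = 0 ∧
            (∑ i, (d i : ZMod p) * x i ^ 3) = 0} : ℝ) := by
  refine ⟨576, by norm_num, ?_⟩
  intro p c d hp h3 hcond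
  haveI : Fact p.Prime := ⟨hp⟩
  classical
  have hcard : ∀ v : ZMod p × ZMod p, v ≠ 0 →
      #(Finset.univ.filter fun i : Fin 16 =>
        v.1 * (c i : ZMod p) + v.2 * (d i : ZMod p) = 0) ≤ 11 := by
    intro v hv
    have h := hcond v.1 v.2 (by
      intro hlm
      exact hv (Prod.ext hlm.1 hlm.2))
    rwa [Nat.card_eq_fintype_card, Fintype.card_subtype] at h
  have hmain := RhoAux.main_generic h3 (fun i => (c i : ZMod p)) (fun i => (d i : ZMod p)) hcard
  rw [Nat.card_eq_fintype_card, Fintype.card_subtype]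
  exact hmain
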